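/- Let h : ℝ → ℝ be nonnegative, integrable on [0,∞), and continuous at 0. Let M > 0 and let M_η (η > 0) be real numbers with M_η → M as η → ∞. Then lim_{η→∞} η·∫_0^∞ log(1+M_η·e^{−ηt})·h(t) dt = h(0)·∫_0^∞ log(1+M·e^{−t}) dt. -/

import Mathlib

open MeasureTheory Filter

private lemma log_term_nonneg {a : ℝ} (ha : 0 ≤ a) (s : ℝ) :
    0 ≤ Real.log (1 + a * Real.exp (-s)) :=
  Real.log_nonneg (by nlinarith [Real.exp_pos (-s)])

private lemma log_term_pos {a : ℝ} (ha : 0 ≤ a) (s : ℝ) :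
    0 < 1 + a * Real.exp (-s) := by nlinarith [Real.exp_pos (-s)]

private lemma log_term_le {a : ℝ} (ha : 0 ≤ a) (s : ℝ) :
    Real.log (1 + a * Real.exp (-s)) ≤ a * Real.exp (-s) := by
  have := Real.log_le_sub_one_of_pos (log_term_pos ha s)
  linarith

private lemma log_term_mono {a b : ℝ} (ha : 0 ≤ a) (hab : a ≤ b) (s : ℝ) :
    Real.log (1 + a * Real.exp (-s)) ≤ Real.log (1 + b * Real.exp (-s)) := by
  apply Real.log_le_log (log_term_pos ha s)
  nlinarith [Real.exp_pos (-s)]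

private lemma integrable_log_term {a : ℝ} (ha : 0 ≤ a) :
    IntegrableOn (fun s => Real.log (1 + a * Real.exp (-s))) (Set.Ioi (0 : ℝ)) := by
  have hmeas : AEStronglyMeasurable (fun s => Real.log (1 + a * Real.exp (-s)))
      (volume.restrict (Set.Ioi (0 : ℝ))) :=
    (Real.measurable_log.comp (by fun_prop)).aestronglyMeasurable
  have hexp : IntegrableOn (fun s : ℝ => a * Real.exp (-s)) (Set.Ioi (0 : ℝ)) := by
    have : IntegrableOn (fun s : ℝ => Real.exp (-1 * s)) (Set.Ioi (0 : ℝ)) :=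
      exp_neg_integrableOn_Ioi 0 one_pos
    simpa [neg_mul, one_mul, IntegrableOn] using this.const_mul a
  refine Integrable.mono hexp hmeas ?_
  filter_upwards with s
  rw [Real.norm_eq_abs, abs_of_nonneg (log_term_nonneg ha s)]
  calc Real.log (1 + a * Real.exp (-s)) ≤ a * Real.exp (-s) := log_term_le ha s
    _ ≤ ‖a * Real.exp (-s)‖ := le_abs_self _

/-- a.e.-strong measurability of `s ↦ h (s / η)` on `Ioi 0`. -/
private lemma aesm_comp_div {h : ℝ → ℝ}
    (hh : AEStronglyMeasurable h (volume.restrict (Set.Ici (0 : ℝ))))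
    {η : ℝ} (hη : 0 < η) :
    AEStronglyMeasurable (fun s => h (s / η)) (volume.restrict (Set.Ioi (0 : ℝ))) := by
  refine ⟨fun s => hh.mk h (s / η),
    hh.stronglyMeasurable_mk.comp_measurable (measurable_id.div_const η), ?_⟩
  have hae : h =ᵐ[volume.restrict (Set.Ici (0 : ℝ))] hh.mk h := hh.ae_eq_mk
  rw [Filter.EventuallyEq, ae_iff, Measure.restrict_apply' measurableSet_Ici] at hae
  rw [Filter.EventuallyEq, ae_iff, Measure.restrict_apply' measurableSet_Ioi]
  have hsub : {s : ℝ | ¬ h (s / η) = hh.mk h (s / η)} ∩ Set.Ioi 0 ⊆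
      (fun s : ℝ => η⁻¹ * s) ⁻¹' ({x : ℝ | ¬ h x = hh.mk h x} ∩ Set.Ici 0) := by
    intro s hs
    refine ⟨?_, ?_⟩
    · have := hs.1; simpa [div_eq_inv_mul] using this
    · have : (0:ℝ) < s := hs.2
      simp only [Set.mem_Ici]
      positivity
  refine measure_mono_null hsub ?_
  rw [Real.volume_preimage_mul_left (inv_ne_zero hη.ne'), hae, mul_zero]

theorem dilog_limit_power_cell (h : ℝ → ℝ) (hnn : ∀ t, 0 ≤ h t)
    (hint : IntegrableOn h (Set.Ici (0 : ℝ)))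
    (hcont : ContinuousAt h 0)
    (M : ℝ) (hM : 0 < M) (Mη : ℝ → ℝ) (hMη : Tendsto Mη atTop (nhds M)) :
    Tendsto (fun η : ℝ =>
        η * ∫ t in Set.Ioi (0 : ℝ), Real.log (1 + Mη η * Real.exp (-η * t)) * h t)
      atTop (nhds (h 0 * ∫ t in Set.Ioi (0 : ℝ), Real.log (1 + M * Real.exp (-t)))) := by
  -- choose δ from continuity at 0
  obtain ⟨δc, hδcpos, hδc⟩ := Metric.continuousAt_iff.mp hcont 1 one_pos
  set δ : ℝ := δc / 2 with hδdef
  have hδpos : 0 < δ := by positivity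
  have hbound_h : ∀ t : ℝ, 0 ≤ t → t ≤ δ → h t ≤ h 0 + 1 := by
    intro t ht ht'
    have hd : dist t 0 < δc := by
      rw [Real.dist_eq, sub_zero, abs_of_nonneg ht]; linarith
    have := hδc hd
    rw [Real.dist_eq] at this
    have := (abs_lt.mp this).2
    linarith
  -- eventual positivity facts
  have hPev : ∀ᶠ η in atTop, 0 < η ∧ 0 < Mη η ∧ Mη η < 2 * M := by
    filter_upwards [eventually_gt_atTop (0:ℝ),
      hMη.eventually (eventually_gt_nhds (show (0:ℝ) < M from hM)),
      hMη.eventually (eventually_lt_nhds (show M < 2 * M by linarith))] with η h1 h2 h3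
    exact ⟨h1, h2, h3⟩
  -- f η = original integrand, integrability
  have hfint : ∀ η : ℝ, 0 < η → 0 < Mη η → Mη η < 2 * M →
      IntegrableOn (fun t => Real.log (1 + Mη η * Real.exp (-η * t)) * h t)
        (Set.Ioi (0 : ℝ)) := by
    intro η hη hM1 hM2
    have hmeas : AEStronglyMeasurable (fun t => Real.log (1 + Mη η * Real.exp (-η * t)) * h t)
        (volume.restrict (Set.Ioi (0 : ℝ))) := by
      refine AEStronglyMeasurable.mul ?_ ((hint.mono_set Set.Ioi_subset_Ici_self).1)
      exact (Real.measurable_log.comp (measurable_const.add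
        ((Real.measurable_exp.comp (measurable_id.const_mul (-η))).const_mul
          (Mη η)))).aestronglyMeasurable
    have hb : IntegrableOn (fun t => Real.log (1 + 2 * M) * h t) (Set.Ioi (0 : ℝ)) :=
      (hint.mono_set Set.Ioi_subset_Ici_self).const_mul _
    refine Integrable.mono hb hmeas ?_
    filter_upwards [ae_restrict_mem measurableSet_Ioi] with t ht
    have ht0 : (0:ℝ) < t := ht
    have hlog0 : 0 ≤ Real.log (1 + Mη η * Real.exp (-η * t)) := by
      have := log_term_nonneg hM1.le (η * t); rwa [← neg_mul] at this
    rw [Real.norm_eq_abs, abs_of_nonneg (mul_nonneg hlog0 (hnn t)), Real.norm_eq_abs]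
    have hle : Real.log (1 + Mη η * Real.exp (-η * t)) ≤ Real.log (1 + 2 * M) := by
      have hexple : Real.exp (-η * t) ≤ 1 := by
        rw [Real.exp_le_one_iff]; nlinarith
      have h1 : (0:ℝ) < 1 + Mη η * Real.exp (-η * t) := by
        have := log_term_pos hM1.le (η * t); rwa [← neg_mul] at this
      apply Real.log_le_log h1
      nlinarith [Real.exp_pos (-η * t)]
    calc Real.log (1 + Mη η * Real.exp (-η * t)) * h t
        ≤ Real.log (1 + 2 * M) * h t :=
          mul_le_mul_of_nonneg_right hle (hnn t)
      _ ≤ |Real.log (1 + 2 * M) * h t| := le_abs_self _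
  -- main part via dominated convergence
  set G : ℝ → ℝ → ℝ := fun η s => Real.log (1 + Mη η * Real.exp (-s)) * h (s / η) with hGdef
  set F : ℝ → ℝ → ℝ := fun η s => Set.indicator (Set.Ioc 0 (η * δ)) (G η) s with hFdef
  have hmain : Tendsto (fun η => ∫ s in Set.Ioi (0:ℝ), F η s) atTop
      (nhds (∫ s in Set.Ioi (0:ℝ), Real.log (1 + M * Real.exp (-s)) * h 0)) := by
    apply tendsto_integral_filter_of_dominated_convergence
      (bound := fun s => Real.log (1 + 2 * M * Real.exp (-s)) * (h 0 + 1))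
    · -- measurability
      filter_upwards [hPev] with η hη
      refine AEStronglyMeasurable.indicator ?_ measurableSet_Ioc
      refine AEStronglyMeasurable.mul ?_ (aesm_comp_div hint.1 hη.1)
      exact (Real.measurable_log.comp (measurable_const.add
        ((Real.measurable_exp.comp measurable_neg).const_mul (Mη η)))).aestronglyMeasurable
    · -- bound
      filter_upwards [hPev] with η hη
      obtain ⟨hη0, hM1, hM2⟩ := hη
      filter_upwards [ae_restrict_mem measurableSet_Ioi] with s hs
      have hbnd0 : 0 ≤ Real.log (1 + 2 * M * Real.exp (-s)) * (h 0 + 1) := by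
        have := log_term_nonneg (by linarith : (0:ℝ) ≤ 2 * M) s
        have := hnn 0
        nlinarith
      by_cases hmem : s ∈ Set.Ioc 0 (η * δ)
      · rw [hFdef]
        simp only [Set.indicator_of_mem hmem]
        have hs0 : (0:ℝ) < s := hmem.1
        have hsδ : s / η ≤ δ := by
          rw [div_le_iff₀ hη0]; linarith [hmem.2]
        have hsδ0 : 0 ≤ s / η := by positivity
        have hhle : h (s / η) ≤ h 0 + 1 := hbound_h _ hsδ0 hsδ
        have hlogle : Real.log (1 + Mη η * Real.exp (-s)) ≤
            Real.log (1 + 2 * M * Real.exp (-s)) := log_term_mono hM1.le (by linarith) s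
        rw [Real.norm_eq_abs, abs_of_nonneg
          (mul_nonneg (log_term_nonneg hM1.le s) (hnn _))]
        exact mul_le_mul hlogle hhle (hnn _) (log_term_nonneg (by linarith) s)
      · rw [hFdef]
        simp only [Set.indicator_of_notMem hmem, norm_zero]
        exact hbnd0
    · -- bound integrable
      exact (integrable_log_term (by linarith : (0:ℝ) ≤ 2 * M)).mul_const (h 0 + 1)
    · -- pointwise limit
      filter_upwards [ae_restrict_mem measurableSet_Ioi] with s hs
      have hs0 : (0:ℝ) < s := hs
      have hev : (fun η => G η s) =ᶠ[atTop] (fun η => F η s) := by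
        filter_upwards [eventually_ge_atTop (s / δ), eventually_gt_atTop (0:ℝ)] with η h1 h2
        have : s ≤ η * δ := by
          rw [div_le_iff₀ hδpos] at h1; linarith
        rw [hFdef]
        simp only [Set.indicator_of_mem (Set.mem_Ioc.mpr ⟨hs0, this⟩)]
      refine Tendsto.congr' hev ?_
      have hlog : Tendsto (fun η => Real.log (1 + Mη η * Real.exp (-s))) atTop
          (nhds (Real.log (1 + M * Real.exp (-s)))) := by
        have hc : ContinuousAt (fun x : ℝ => Real.log (1 + x * Real.exp (-s))) M := by
          apply ContinuousAt.log
          · fun_prop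
          · exact (log_term_pos hM.le s).ne'
        exact hc.tendsto.comp hMη
      have hh : Tendsto (fun η => h (s / η)) atTop (nhds (h 0)) := by
        refine hcont.tendsto.comp ?_
        exact tendsto_const_nhds.div_atTop tendsto_id
      exact hlog.mul hh
  -- tail part
  have htail : Tendsto (fun η : ℝ =>
      η * ∫ t in Set.Ioi δ, Real.log (1 + Mη η * Real.exp (-η * t)) * h t)
      atTop (nhds 0) := by
    have hC : ∀ η : ℝ, 0 < η → 0 < Mη η → Mη η < 2 * M →
        η * ∫ t in Set.Ioi δ, Real.log (1 + Mη η * Real.exp (-η * t)) * h t ≤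
          2 * M * (∫ t in Set.Ioi δ, h t) * (η * Real.exp (-η * δ)) := by
      intro η hη hM1 hM2
      have hIle : ∫ t in Set.Ioi δ, Real.log (1 + Mη η * Real.exp (-η * t)) * h t ≤
          ∫ t in Set.Ioi δ, (2 * M * Real.exp (-η * δ)) * h t := by
        refine setIntegral_mono_on ((hfint η hη hM1 hM2).mono_set
          (Set.Ioi_subset_Ioi hδpos.le))
          (((hint.mono_set (le_trans (Set.Ioi_subset_Ioi hδpos.le)
            Set.Ioi_subset_Ici_self)).const_mul _)) measurableSet_Ioi ?_
        intro t ht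
        have ht' : δ < t := ht
        have hloge : Real.log (1 + Mη η * Real.exp (-η * t)) ≤ 2 * M * Real.exp (-η * δ) := by
          have h1 : Real.log (1 + Mη η * Real.exp (-η * t)) ≤ Mη η * Real.exp (-η * t) := by
            have := log_term_le hM1.le (η * t); rwa [← neg_mul] at this
          have h2 : Real.exp (-η * t) ≤ Real.exp (-η * δ) := by
            apply Real.exp_le_exp.mpr; nlinarith
          nlinarith [Real.exp_pos (-η * t), Real.exp_pos (-η * δ)]
        exact mul_le_mul_of_nonneg_right hloge (hnn t)
      have hconst : ∫ t in Set.Ioi δ, (2 * M * Real.exp (-η * δ)) * h t =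
          2 * M * Real.exp (-η * δ) * ∫ t in Set.Ioi δ, h t := by
        rw [integral_const_mul]
      calc η * ∫ t in Set.Ioi δ, Real.log (1 + Mη η * Real.exp (-η * t)) * h t
          ≤ η * (2 * M * Real.exp (-η * δ) * ∫ t in Set.Ioi δ, h t) := by
            rw [← hconst]; exact mul_le_mul_of_nonneg_left hIle hη.le
        _ = 2 * M * (∫ t in Set.Ioi δ, h t) * (η * Real.exp (-η * δ)) := by ring
    have hxe : Tendsto (fun η : ℝ => η * Real.exp (-η * δ)) atTop (nhds 0) := by
      have h1 : Tendsto (fun x : ℝ => x ^ 1 * Real.exp (-x)) atTop (nhds 0) :=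
        Real.tendsto_pow_mul_exp_neg_atTop_nhds_zero 1
      have h2 : Tendsto (fun η : ℝ => δ * η) atTop atTop :=
        Tendsto.const_mul_atTop hδpos tendsto_id
      have h3 := (h1.comp h2).const_mul (1 / δ)
      rw [mul_zero] at h3
      refine h3.congr fun η => ?_
      simp only [Function.comp_apply, pow_one]
      field_simp
    have hrhs : Tendsto (fun η : ℝ =>
        2 * M * (∫ t in Set.Ioi δ, h t) * (η * Real.exp (-η * δ))) atTop (nhds 0) := by
      have := hxe.const_mul (2 * M * (∫ t in Set.Ioi δ, h t))
      rwa [mul_zero] at this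
    refine squeeze_zero' ?_ ?_ hrhs
    · filter_upwards [hPev] with η hη
      obtain ⟨hη0, hM1, hM2⟩ := hη
      refine mul_nonneg hη0.le (setIntegral_nonneg measurableSet_Ioi fun t ht => ?_)
      refine mul_nonneg ?_ (hnn t)
      have := log_term_nonneg hM1.le (η * t); rwa [← neg_mul] at this
    · filter_upwards [hPev] with η hη
      exact hC η hη.1 hη.2.1 hη.2.2
  -- combine
  have hlimeq : ∫ s in Set.Ioi (0:ℝ), Real.log (1 + M * Real.exp (-s)) * h 0 =
      h 0 * ∫ t in Set.Ioi (0:ℝ), Real.log (1 + M * Real.exp (-t)) := by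
    rw [integral_mul_const, mul_comm]
  have hsum : Tendsto (fun η : ℝ => (∫ s in Set.Ioi (0:ℝ), F η s) +
      η * ∫ t in Set.Ioi δ, Real.log (1 + Mη η * Real.exp (-η * t)) * h t) atTop
      (nhds (h 0 * ∫ t in Set.Ioi (0:ℝ), Real.log (1 + M * Real.exp (-t)))) := by
    have := hmain.add htail
    rwa [add_zero, hlimeq] at this
  refine Tendsto.congr' ?_ hsum
  filter_upwards [hPev] with η hη
  obtain ⟨hη0, hM1, hM2⟩ := hη
  -- change of variables on (0, δ]
  have hcov : ∫ s in Set.Ioi (0:ℝ), F η s =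
      η * ∫ t in Set.Ioc 0 δ, Real.log (1 + Mη η * Real.exp (-η * t)) * h t := by
    have key := integral_comp_mul_left_Ioi (fun s => F η s) 0 hη0
    rw [mul_zero] at key
    have hlhs : ∫ x in Set.Ioi (0:ℝ), F η (η * x) =
        ∫ x in Set.Ioi (0:ℝ), Set.indicator (Set.Ioc 0 δ)
          (fun t => Real.log (1 + Mη η * Real.exp (-η * t)) * h t) x := by
      refine setIntegral_congr_fun measurableSet_Ioi fun x hx => ?_
      by_cases hmem : x ∈ Set.Ioc 0 δ
      · have hmem' : η * x ∈ Set.Ioc 0 (η * δ) :=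
          ⟨mul_pos hη0 hmem.1, mul_le_mul_of_nonneg_left hmem.2 hη0.le⟩
        rw [hFdef]
        simp only [Set.indicator_of_mem hmem', Set.indicator_of_mem hmem, hGdef]
        rw [mul_div_cancel_left₀ _ hη0.ne', neg_mul]
      · have hmem' : η * x ∉ Set.Ioc 0 (η * δ) := by
          intro hc
          refine hmem ⟨?_, le_of_mul_le_mul_left hc.2 hη0⟩
          rcases mul_pos_iff.mp hc.1 with h'|h'
          · exact h'.2
          · linarith [h'.1]
        rw [hFdef]
        simp only [Set.indicator_of_notMem hmem', Set.indicator_of_notMem hmem]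
    rw [hlhs] at key
    rw [setIntegral_indicator measurableSet_Ioc,
      Set.inter_eq_self_of_subset_right (Set.Ioc_subset_Ioi_self)] at key
    rw [key, smul_eq_mul, ← mul_assoc, mul_inv_cancel₀ hη0.ne', one_mul]
  -- splitting the integral
  have hsplit : ∫ t in Set.Ioi (0:ℝ), Real.log (1 + Mη η * Real.exp (-η * t)) * h t =
      (∫ t in Set.Ioc 0 δ, Real.log (1 + Mη η * Real.exp (-η * t)) * h t) +
      ∫ t in Set.Ioi δ, Real.log (1 + Mη η * Real.exp (-η * t)) * h t := by
    rw [← Set.Ioc_union_Ioi_eq_Ioi hδpos.le]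
    exact setIntegral_union (Set.Ioc_disjoint_Ioi le_rfl) measurableSet_Ioi
      ((hfint η hη0 hM1 hM2).mono_set Set.Ioc_subset_Ioi_self)
      ((hfint η hη0 hM1 hM2).mono_set (Set.Ioi_subset_Ioi hδpos.le))
  rw [hcov, hsplit]
  ring
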